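/- The Nijenhuis tensor of the invariant almost complex structure J on 𝔪 = 𝔤/𝔥 is non-degenerate: the bilinear map N : W × W → 𝔪 defined by N(u, v) = π([J̃u, J̃v] − [u, v]) − J(π([J̃u, v] + [u, J̃v])) has image whose real linear span is all of 𝔪. (Since dim 𝔪 = 6 and N is J-antilinear in each argument, this is equivalent to the Nijenhuis tensor, viewed as a complex-antilinear map Λ²_ℂ 𝔪 → 𝔪, being an isomorphism.) -/

import Mathlib

noncomputable section

/-- The underlying space of the 9-dimensional Lie algebra `𝔤`; coordinates are taken
with respect to the ordered basis `z, b, x₁, x₂, x₃, x₄, h, e, f`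
(so index 0 = z, 1 = b, 2 = x₁, 3 = x₂, 4 = x₃, 5 = x₄, 6 = h, 7 = e, 8 = f). -/
def G : Type := Fin 9 → ℝ

instance : AddCommGroup G := inferInstanceAs (AddCommGroup (Fin 9 → ℝ))
instance : Module ℝ G := inferInstanceAs (Module ℝ (Fin 9 → ℝ))

@[simp] lemma G.add_apply (u v : G) (k : Fin 9) : (u + v) k = u k + v k := rfl
@[simp] lemma G.smul_apply (c : ℝ) (u : G) (k : Fin 9) : (c • u) k = c * u k := rfl
@[simp] lemma G.zero_apply (k : Fin 9) : (0 : G) k = 0 := rfl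

/-- The Lie bracket of `𝔤` determined by `[b,xᵢ] = xᵢ`, `[b,z] = 2z`, `[h,x₁] = −3x₁`,
`[h,x₂] = −x₂`, `[h,x₃] = x₃`, `[h,x₄] = 3x₄`, `[f,x₂] = −3x₁`, `[f,x₃] = −2x₂`,
`[f,x₄] = −x₃`, `[e,x₁] = x₂`, `[e,x₂] = 2x₃`, `[e,x₃] = 3x₄`, `[x₁,x₄] = z`,
`[x₂,x₃] = −3z`, `[h,f] = −2f`, `[h,e] = 2e`, `[f,e] = h`, all other brackets of
basis elements being zero. -/
def gb (u v : G) : G := fun k =>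
  match k with
  | 0 => -2*(u 0*v 1 - u 1*v 0) + (u 2*v 5 - u 5*v 2) - 3*(u 3*v 4 - u 4*v 3)
  | 1 => 0
  | 2 => (u 1*v 2 - u 2*v 1) + 3*(u 2*v 6 - u 6*v 2) + 3*(u 3*v 8 - u 8*v 3)
  | 3 => (u 1*v 3 - u 3*v 1) - (u 2*v 7 - u 7*v 2) + (u 3*v 6 - u 6*v 3) + 2*(u 4*v 8 - u 8*v 4)
  | 4 => (u 1*v 4 - u 4*v 1) - 2*(u 3*v 7 - u 7*v 3) - (u 4*v 6 - u 6*v 4) + (u 5*v 8 - u 8*v 5)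
  | 5 => (u 1*v 5 - u 5*v 1) - 3*(u 4*v 7 - u 7*v 4) - 3*(u 5*v 6 - u 6*v 5)
  | 6 => -(u 7*v 8 - u 8*v 7)
  | 7 => 2*(u 6*v 7 - u 7*v 6)
  | 8 => -2*(u 6*v 8 - u 8*v 6)

instance : LieRing G where
  bracket := gb
  add_lie := by intro x y z; funext k; fin_cases k <;> simp only [gb, G.add_apply] <;> ring
  lie_add := by intro x y z; funext k; fin_cases k <;> simp only [gb, G.add_apply] <;> ring
  lie_self := by intro x; funext k; fin_cases k <;> simp only [gb, G.zero_apply] <;> ring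
  leibniz_lie := by intro x y z; funext k; fin_cases k <;> simp only [gb, G.add_apply] <;> ring

lemma G.lie_def (u v : G) : ⁅u, v⁆ = gb u v := rfl

instance : LieAlgebra ℝ G where
  lie_smul := by
    intro c x y; funext k
    rw [G.lie_def, G.lie_def]
    fin_cases k <;> simp only [gb, G.smul_apply] <;> ring

/-- basis vector `z` -/ def zv : G := Pi.single 0 1
/-- basis vector `b` -/ def bv : G := Pi.single 1 1
/-- basis vector `x₁` -/ def x1v : G := Pi.single 2 1
/-- basis vector `x₂` -/ def x2v : G := Pi.single 3 1
/-- basis vector `x₃` -/ def x3v : G := Pi.single 4 1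
/-- basis vector `x₄` -/ def x4v : G := Pi.single 5 1
/-- basis vector `h` -/ def hv : G := Pi.single 6 1
/-- basis vector `e` -/ def ev : G := Pi.single 7 1
/-- basis vector `f` -/ def fv : G := Pi.single 8 1


/-- The subalgebra `𝔥 = span{x₁, h − b, f − z}` (as a subspace of `𝔤`). -/
def Hsub : Submodule ℝ G := Submodule.span ℝ {x1v, hv - bv, fv - zv}

/-- The quotient map `π : 𝔤 → 𝔪 = 𝔤/𝔥`. -/
def pr : G →ₗ[ℝ] G ⧸ Hsub := Hsub.mkQ

/-- The defining values of the invariant almost complex structure `J` on `𝔪 = 𝔤/𝔥`: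
`J z̄ = x̄₂`, `J b̄ = −x̄₃`, `J ē = x̄₄`, `J x̄₂ = −z̄`, `J x̄₃ = b̄`, `J x̄₄ = −ē`. -/
def IsJ (J : Module.End ℝ (G ⧸ Hsub)) : Prop :=
  J (pr zv) = pr x2v ∧ J (pr bv) = -pr x3v ∧ J (pr ev) = pr x4v ∧
  J (pr x2v) = -pr zv ∧ J (pr x3v) = pr bv ∧ J (pr x4v) = -pr ev

/-- The complement `W = span{z, b, e, x₂, x₃, x₄} ⊂ 𝔤`, on which `π` restricts to a linear
isomorphism onto `𝔪 = 𝔤/𝔥`. -/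
def Wsub : Submodule ℝ G := Submodule.span ℝ {zv, bv, ev, x2v, x3v, x4v}


@[simp] lemma G.neg_apply (u : G) (k : Fin 9) : (-u) k = -u k := rfl
@[simp] lemma G.sub_apply (u v : G) (k : Fin 9) : (u - v) k = u k - v k := rfl
@[simp] lemma G.neg_apply' (u : Fin 9 → ℝ) (k : Fin 9) : (@Neg.neg G _ u) k = -u k := rfl
@[simp] lemma G.sub_apply' (u v : Fin 9 → ℝ) (k : Fin 9) : (@HSub.hSub G G G _ u v) k = u k - v k := rfl
@[simp] lemma G.add_apply' (u v : Fin 9 → ℝ) (k : Fin 9) : (@HAdd.hAdd G G G _ u v) k = u k + v k := rfl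
@[simp] lemma G.smul_apply' (c : ℝ) (u : Fin 9 → ℝ) (k : Fin 9) : (@HSMul.hSMul ℝ G G _ c u) k = c * u k := rfl

/-- coordinate functional -/
def ck (k : Fin 9) : G →ₗ[ℝ] ℝ where
  toFun w := w k
  map_add' _ _ := rfl
  map_smul' _ _ := rfl

@[simp] lemma ck_apply (k : Fin 9) (w : G) : ck k w = w k := rfl
@[simp] lemma ck_apply' (k : Fin 9) (w : Fin 9 → ℝ) : ck k (w : G) = w k := rfl

lemma zv_W : zv ∈ Wsub := Submodule.subset_span (by simp)
lemma bv_W : bv ∈ Wsub := Submodule.subset_span (by simp)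
lemma ev_W : ev ∈ Wsub := Submodule.subset_span (by simp)
lemma x2v_W : x2v ∈ Wsub := Submodule.subset_span (by simp)
lemma x3v_W : x3v ∈ Wsub := Submodule.subset_span (by simp)
lemma x4v_W : x4v ∈ Wsub := Submodule.subset_span (by simp)

lemma x1v_H : x1v ∈ Hsub := Submodule.subset_span (by simp)
lemma hb_H : hv - bv ∈ Hsub := Submodule.subset_span (by simp)
lemma fz_H : fv - zv ∈ Hsub := Submodule.subset_span (by simp)

lemma W_coord {w : G} (h : w ∈ Wsub) : w 2 = 0 ∧ w 6 = 0 ∧ w 8 = 0 := by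
  have hle : Wsub ≤ LinearMap.ker (ck 2) ⊓ (LinearMap.ker (ck 6) ⊓ LinearMap.ker (ck 8)) := by
    rw [Wsub, Submodule.span_le]
    intro x hx
    simp only [Set.mem_insert_iff, Set.mem_singleton_iff] at hx
    rcases hx with rfl | rfl | rfl | rfl | rfl | rfl <;>
    · rw [SetLike.mem_coe, Submodule.mem_inf, Submodule.mem_inf,
        LinearMap.mem_ker, LinearMap.mem_ker, LinearMap.mem_ker]
      refine ⟨?_, ?_, ?_⟩ <;>
        simp [zv, bv, ev, x2v, x3v, x4v, Pi.single_apply]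
  have := hle h
  rw [Submodule.mem_inf, Submodule.mem_inf, LinearMap.mem_ker, LinearMap.mem_ker,
    LinearMap.mem_ker] at this
  exact ⟨this.1, this.2.1, this.2.2⟩

/-- The linear map whose kernel contains `Hsub` and which is the identity minus the
projection onto the `x₁, h−b, f−z` coordinates. -/
def Lrep : G →ₗ[ℝ] G :=
  LinearMap.id - (ck 2).smulRight x1v - (ck 6).smulRight (hv - bv) - (ck 8).smulRight (fv - zv)

lemma H_ker : Hsub ≤ LinearMap.ker Lrep := by
  rw [Hsub, Submodule.span_le]
  intro x hx
  simp only [Set.mem_insert_iff, Set.mem_singleton_iff] at hx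
  rcases hx with rfl | rfl | rfl <;>
  · rw [SetLike.mem_coe, LinearMap.mem_ker]
    simp only [Lrep, LinearMap.sub_apply, LinearMap.id_apply, LinearMap.smulRight_apply,
      ck_apply]
    funext k
    fin_cases k <;> simp only [G.sub_apply, G.smul_apply] <;> simp [x1v, hv, bv, fv, zv, Pi.single_apply]

lemma pr_inj {w w' : G} (hw : w ∈ Wsub) (hw' : w' ∈ Wsub) (h : pr w = pr w') : w = w' := by
  have hd : w - w' ∈ Hsub := (Submodule.Quotient.eq _).mp h
  obtain ⟨a1, a2, a3⟩ := W_coord hw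
  obtain ⟨b1, b2, b3⟩ := W_coord hw'
  have h0 : Lrep (w - w') = 0 := LinearMap.mem_ker.mp (H_ker hd)
  have h1 : Lrep (w - w') = w - w' := by
    simp [Lrep, LinearMap.sub_apply, a1, a2, a3, b1, b2, b3]
  have h2 : w - w' = 0 := by rw [← h1, h0]
  exact sub_eq_zero.mp h2

lemma pr_x1 : pr x1v = 0 := (Submodule.Quotient.mk_eq_zero _).mpr x1v_H
lemma pr_h : pr hv = pr bv := (Submodule.Quotient.eq _).mpr hb_H
lemma pr_f : pr fv = pr zv := (Submodule.Quotient.eq _).mpr fz_H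

section Brackets

lemma br1 : ⁅x2v, -x3v⁆ = (3:ℝ) • zv := by
  funext k; rw [G.lie_def]
  fin_cases k <;> simp [gb, zv, x2v, x3v, Pi.single_apply]
lemma br2 : ⁅zv, bv⁆ = -((2:ℝ) • zv) := by
  funext k; rw [G.lie_def]
  fin_cases k <;> simp [gb, zv, bv, Pi.single_apply]
lemma br3 : ⁅x2v, bv⁆ = -x2v := by
  funext k; rw [G.lie_def]
  fin_cases k <;> simp [gb, x2v, bv, Pi.single_apply]
lemma br4 : ⁅zv, -x3v⁆ = (0:G) := by
  funext k; rw [G.lie_def]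
  fin_cases k <;> simp [gb, zv, x3v, Pi.single_apply]
lemma br5 : ⁅x2v, x4v⁆ = (0:G) := by
  funext k; rw [G.lie_def]
  fin_cases k <;> simp [gb, x2v, x4v, Pi.single_apply]
lemma br6 : ⁅zv, ev⁆ = (0:G) := by
  funext k; rw [G.lie_def]
  fin_cases k <;> simp [gb, zv, ev, Pi.single_apply]
lemma br7 : ⁅x2v, ev⁆ = -((2:ℝ) • x3v) := by
  funext k; rw [G.lie_def]
  fin_cases k <;> simp [gb, x2v, ev, x3v, Pi.single_apply]
lemma br8 : ⁅zv, x4v⁆ = (0:G) := by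
  funext k; rw [G.lie_def]
  fin_cases k <;> simp [gb, zv, x4v, Pi.single_apply]
lemma br9 : ⁅zv, x3v⁆ = (0:G) := by
  funext k; rw [G.lie_def]
  fin_cases k <;> simp [gb, zv, x3v, Pi.single_apply]
lemma br10 : ⁅x2v, x3v⁆ = -((3:ℝ) • zv) := by
  funext k; rw [G.lie_def]
  fin_cases k <;> simp [gb, x2v, x3v, zv, Pi.single_apply]
lemma br11 : ⁅x2v, -ev⁆ = (2:ℝ) • x3v := by
  funext k; rw [G.lie_def]
  fin_cases k <;> simp [gb, x2v, ev, x3v, Pi.single_apply]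
lemma br12 : ⁅zv, -ev⁆ = (0:G) := by
  funext k; rw [G.lie_def]
  fin_cases k <;> simp [gb, zv, ev, Pi.single_apply]
lemma br13 : ⁅-x3v, x4v⁆ = (0:G) := by
  funext k; rw [G.lie_def]
  fin_cases k <;> simp [gb, x3v, x4v, Pi.single_apply]
lemma br14 : ⁅bv, ev⁆ = (0:G) := by
  funext k; rw [G.lie_def]
  fin_cases k <;> simp [gb, bv, ev, Pi.single_apply]
lemma br15 : ⁅-x3v, ev⁆ = (3:ℝ) • x4v := by
  funext k; rw [G.lie_def]
  fin_cases k <;> simp [gb, x3v, ev, x4v, Pi.single_apply]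
lemma br16 : ⁅bv, x4v⁆ = x4v := by
  funext k; rw [G.lie_def]
  fin_cases k <;> simp [gb, bv, x4v, Pi.single_apply]
lemma br17 : ⁅-x3v, -ev⁆ = -((3:ℝ) • x4v) := by
  funext k; rw [G.lie_def]
  fin_cases k <;> simp [gb, x3v, ev, x4v, Pi.single_apply]
lemma br18 : ⁅bv, -ev⁆ = (0:G) := by
  funext k; rw [G.lie_def]
  fin_cases k <;> simp [gb, bv, ev, Pi.single_apply]

end Brackets

lemma span_mem_aux (J : Module.End ℝ (G ⧸ Hsub)) (Jt : Wsub →ₗ[ℝ] Wsub)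
    (u v : Wsub) (m : G ⧸ Hsub)
    (h : m = pr (⁅(Jt u : G), (Jt v : G)⁆ - ⁅(u : G), (v : G)⁆) -
          J (pr (⁅(Jt u : G), (v : G)⁆ + ⁅(u : G), (Jt v : G)⁆))) :
    m ∈ Submodule.span ℝ {n : G ⧸ Hsub | ∃ u v : Wsub,
      n = pr (⁅(Jt u : G), (Jt v : G)⁆ - ⁅(u : G), (v : G)⁆) -
          J (pr (⁅(Jt u : G), (v : G)⁆ + ⁅(u : G), (Jt v : G)⁆))} :=
  Submodule.subset_span ⟨u, v, h⟩

/-- The Nijenhuis tensor of the invariant almost complex structure `J` on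
`𝔪 = 𝔤/𝔥` is non-degenerate: with `J̃ = (π|_W)⁻¹ ∘ J ∘ (π|_W) : W → W`, the bilinear map
`N(u,v) = π([J̃u, J̃v] − [u,v]) − J(π([J̃u, v] + [u, J̃v]))` on `W × W` has image whose real
linear span is all of `𝔪`. -/
theorem stmt9 (J : Module.End ℝ (G ⧸ Hsub)) (hJ : IsJ J)
    (Jt : Wsub →ₗ[ℝ] Wsub) (hJt : ∀ w : Wsub, pr (Jt w : G) = J (pr (w : G))) :
    Submodule.span ℝ {n : G ⧸ Hsub | ∃ u v : Wsub,
      n = pr (⁅(Jt u : G), (Jt v : G)⁆ - ⁅(u : G), (v : G)⁆) -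
          J (pr (⁅(Jt u : G), (v : G)⁆ + ⁅(u : G), (Jt v : G)⁆))} = ⊤ := by
  obtain ⟨hJ1, hJ2, hJ3, hJ4, hJ5, hJ6⟩ := hJ
  -- values of Jt on the generators of W
  have jt_val : ∀ (u t : G) (hu : u ∈ Wsub) (ht : t ∈ Wsub),
      J (pr u) = pr t → (Jt ⟨u, hu⟩ : G) = t := fun u t hu ht h =>
    pr_inj (Jt ⟨u, hu⟩).2 ht (by rw [hJt]; exact h)
  have hz : (Jt ⟨zv, zv_W⟩ : G) = x2v := jt_val _ _ _ x2v_W hJ1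
  have hb : (Jt ⟨bv, bv_W⟩ : G) = -x3v :=
    jt_val _ _ _ (neg_mem x3v_W) (by rw [map_neg]; exact hJ2)
  have he : (Jt ⟨ev, ev_W⟩ : G) = x4v := jt_val _ _ _ x4v_W hJ3
  have hx3 : (Jt ⟨x3v, x3v_W⟩ : G) = bv := jt_val _ _ _ bv_W hJ5
  have hx4 : (Jt ⟨x4v, x4v_W⟩ : G) = -ev :=
    jt_val _ _ _ (neg_mem ev_W) (by rw [map_neg]; exact hJ6)
  -- the six Nijenhuis values
  have m1 : (4:ℝ) • pr zv ∈ Submodule.span ℝ {n : G ⧸ Hsub | ∃ u v : Wsub,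
      n = pr (⁅(Jt u : G), (Jt v : G)⁆ - ⁅(u : G), (v : G)⁆) -
          J (pr (⁅(Jt u : G), (v : G)⁆ + ⁅(u : G), (Jt v : G)⁆))} := by
    refine span_mem_aux J Jt ⟨zv, zv_W⟩ ⟨bv, bv_W⟩ _ ?_
    rw [hz, hb]
    rw [show ((⟨zv, zv_W⟩ : Wsub) : G) = zv from rfl,
        show ((⟨bv, bv_W⟩ : Wsub) : G) = bv from rfl, br1, br2, br3, br4]
    simp only [map_smul, map_sub, map_neg, map_add, map_zero, add_zero, hJ4]
    module
  have m2 : (2:ℝ) • pr bv ∈ Submodule.span ℝ {n : G ⧸ Hsub | ∃ u v : Wsub,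
      n = pr (⁅(Jt u : G), (Jt v : G)⁆ - ⁅(u : G), (v : G)⁆) -
          J (pr (⁅(Jt u : G), (v : G)⁆ + ⁅(u : G), (Jt v : G)⁆))} := by
    refine span_mem_aux J Jt ⟨zv, zv_W⟩ ⟨ev, ev_W⟩ _ ?_
    rw [hz, he]
    rw [show ((⟨zv, zv_W⟩ : Wsub) : G) = zv from rfl,
        show ((⟨ev, ev_W⟩ : Wsub) : G) = ev from rfl, br5, br6, br7, br8]
    simp only [map_smul, map_sub, map_neg, map_add, map_zero, add_zero, hJ5]
    module
  have m3 : (4:ℝ) • pr x2v ∈ Submodule.span ℝ {n : G ⧸ Hsub | ∃ u v : Wsub,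
      n = pr (⁅(Jt u : G), (Jt v : G)⁆ - ⁅(u : G), (v : G)⁆) -
          J (pr (⁅(Jt u : G), (v : G)⁆ + ⁅(u : G), (Jt v : G)⁆))} := by
    refine span_mem_aux J Jt ⟨zv, zv_W⟩ ⟨x3v, x3v_W⟩ _ ?_
    rw [hz, hx3]
    rw [show ((⟨zv, zv_W⟩ : Wsub) : G) = zv from rfl,
        show ((⟨x3v, x3v_W⟩ : Wsub) : G) = x3v from rfl, br3, br9, br10, br2]
    simp only [map_smul, map_sub, map_neg, map_add, map_zero, add_zero, sub_zero, hJ1]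
    module
  have m4 : (2:ℝ) • pr x3v ∈ Submodule.span ℝ {n : G ⧸ Hsub | ∃ u v : Wsub,
      n = pr (⁅(Jt u : G), (Jt v : G)⁆ - ⁅(u : G), (v : G)⁆) -
          J (pr (⁅(Jt u : G), (v : G)⁆ + ⁅(u : G), (Jt v : G)⁆))} := by
    refine span_mem_aux J Jt ⟨zv, zv_W⟩ ⟨x4v, x4v_W⟩ _ ?_
    rw [hz, hx4]
    rw [show ((⟨zv, zv_W⟩ : Wsub) : G) = zv from rfl,
        show ((⟨x4v, x4v_W⟩ : Wsub) : G) = x4v from rfl, br11, br8, br5, br12]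
    simp only [map_smul, map_sub, map_neg, map_add, map_zero, add_zero, sub_zero]
  have m5 : (4:ℝ) • pr ev ∈ Submodule.span ℝ {n : G ⧸ Hsub | ∃ u v : Wsub,
      n = pr (⁅(Jt u : G), (Jt v : G)⁆ - ⁅(u : G), (v : G)⁆) -
          J (pr (⁅(Jt u : G), (v : G)⁆ + ⁅(u : G), (Jt v : G)⁆))} := by
    refine span_mem_aux J Jt ⟨bv, bv_W⟩ ⟨ev, ev_W⟩ _ ?_
    rw [hb, he]
    rw [show ((⟨bv, bv_W⟩ : Wsub) : G) = bv from rfl,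
        show ((⟨ev, ev_W⟩ : Wsub) : G) = ev from rfl, br13, br14, br15, br16]
    simp only [map_smul, map_sub, map_neg, map_add, map_zero, sub_zero, zero_sub, hJ6]
    module
  have m6 : (-4:ℝ) • pr x4v ∈ Submodule.span ℝ {n : G ⧸ Hsub | ∃ u v : Wsub,
      n = pr (⁅(Jt u : G), (Jt v : G)⁆ - ⁅(u : G), (v : G)⁆) -
          J (pr (⁅(Jt u : G), (v : G)⁆ + ⁅(u : G), (Jt v : G)⁆))} := by
    refine span_mem_aux J Jt ⟨bv, bv_W⟩ ⟨x4v, x4v_W⟩ _ ?_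
    rw [hb, hx4]
    rw [show ((⟨bv, bv_W⟩ : Wsub) : G) = bv from rfl,
        show ((⟨x4v, x4v_W⟩ : Wsub) : G) = x4v from rfl, br17, br16, br13, br18]
    simp only [map_smul, map_sub, map_neg, map_add, map_zero, add_zero]
    module
  -- rescale
  have sc : ∀ (c : ℝ) (x : G ⧸ Hsub) (S : Submodule ℝ (G ⧸ Hsub)),
      c ≠ 0 → c • x ∈ S → x ∈ S := by
    intro c x S hc h
    have := S.smul_mem c⁻¹ h
    rwa [smul_smul, inv_mul_cancel₀ hc, one_smul] at this
  have pz := sc 4 _ _ (by norm_num) m1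
  have pb := sc 2 _ _ (by norm_num) m2
  have px2 := sc 4 _ _ (by norm_num) m3
  have px3 := sc 2 _ _ (by norm_num) m4
  have pe := sc 4 _ _ (by norm_num) m5
  have px4 := sc (-4) _ _ (by norm_num) m6
  have px1 : pr x1v ∈ Submodule.span ℝ {n : G ⧸ Hsub | ∃ u v : Wsub,
      n = pr (⁅(Jt u : G), (Jt v : G)⁆ - ⁅(u : G), (v : G)⁆) -
          J (pr (⁅(Jt u : G), (v : G)⁆ + ⁅(u : G), (Jt v : G)⁆))} := by
    rw [pr_x1]; exact Submodule.zero_mem _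
  have ph : pr hv ∈ Submodule.span ℝ {n : G ⧸ Hsub | ∃ u v : Wsub,
      n = pr (⁅(Jt u : G), (Jt v : G)⁆ - ⁅(u : G), (v : G)⁆) -
          J (pr (⁅(Jt u : G), (v : G)⁆ + ⁅(u : G), (Jt v : G)⁆))} := by
    rw [pr_h]; exact pb
  have pf : pr fv ∈ Submodule.span ℝ {n : G ⧸ Hsub | ∃ u v : Wsub,
      n = pr (⁅(Jt u : G), (Jt v : G)⁆ - ⁅(u : G), (v : G)⁆) -
          J (pr (⁅(Jt u : G), (v : G)⁆ + ⁅(u : G), (Jt v : G)⁆))} := by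
    rw [pr_f]; exact pz
  -- conclude
  rw [Submodule.eq_top_iff']
  intro x
  obtain ⟨g, rfl⟩ := Hsub.mkQ_surjective x
  have hgexp : g = ∑ k : Fin 9, g k • (Pi.single k 1 : G) := by
    funext j
    rw [show (∑ k : Fin 9, g k • (Pi.single k 1 : G)) j
        = ck j (∑ k : Fin 9, g k • (Pi.single k 1 : G)) from rfl]
    erw [map_sum]
    simp [Pi.single_apply]
    exact ((Finset.sum_ite_eq Finset.univ j (fun x => g x)).trans (if_pos (Finset.mem_univ j))).symm
  rw [show Hsub.mkQ g = pr g from rfl, hgexp]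
  erw [map_sum]
  refine Submodule.sum_mem _ fun k _ => ?_
  erw [map_smul]
  refine Submodule.smul_mem _ _ ?_
  fin_cases k
  · exact pz
  · exact pb
  · exact px1
  · exact px2
  · exact px3
  · exact px4
  · exact ph
  · exact pe
  · exact pf
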